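/- For every p > 0 one has, at the point x = ap/2, the lower bound p·∂²φ/∂x²(ap/2, p) ≥ p·υ·e^{−2υ}; in particular, setting p₁ = υ⁻¹·e^{2υ}, one has p₁·∂²φ/∂x²(a p₁/2, p₁) ≥ 1 and p·∂²φ/∂x²(a p/2, p) > 1 for every p > p₁. -/

import Mathlib

/-- The function `φ(x,p) = ln Σ_{n≥0} (υⁿ/n!)·exp(xn − (ap/2)n²)`. -/
noncomputable def phi (υ a x p : ℝ) : ℝ :=
  Real.log (∑' n : ℕ, (υ ^ n / (Nat.factorial n : ℝ)) *
    Real.exp (x * n - (a * p / 2) * (n : ℝ) ^ 2))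

open Real Filter

lemma aux_summable (k : ℕ) (w q : ℝ) (hw : 0 < w) (hq : 0 < q) :
    Summable (fun n : ℕ => (n : ℝ) ^ k * w ^ n * Real.exp (-(q * (n : ℝ) ^ 2))) := by
  obtain ⟨N, hN⟩ : ∃ N : ℕ, Real.log w < q * N := by
    obtain ⟨N, hN⟩ := exists_nat_gt (Real.log w / q)
    exact ⟨N, by rwa [div_lt_iff₀ hq, mul_comm] at hN⟩
  set r : ℝ := w * Real.exp (-(q * N)) with hr
  have hr0 : 0 < r := mul_pos hw (Real.exp_pos _)
  have hr1 : r < 1 := by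
    rw [hr, ← Real.exp_log hw, ← Real.exp_add]
    apply Real.exp_lt_one_iff.mpr
    linarith
  rw [← summable_nat_add_iff N]
  have hgeom : Summable (fun n : ℕ => ((n + N : ℕ) : ℝ) ^ k * r ^ (n + N)) := by
    exact (summable_nat_add_iff (f := fun m : ℕ => (m : ℝ) ^ k * r ^ m) N).mpr
      (summable_pow_mul_geometric_of_norm_lt_one k (by rwa [Real.norm_eq_abs, abs_of_pos hr0]))
  refine hgeom.of_nonneg_of_le (fun n => by positivity) (fun n => ?_)
  have h1 : Real.exp (-(q * ((n + N : ℕ) : ℝ) ^ 2)) ≤ Real.exp (-(q * N)) ^ (n + N) := by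
    rw [← Real.exp_nat_mul]
    apply Real.exp_le_exp.mpr
    have : (N : ℝ) * (n + N : ℕ) ≤ ((n + N : ℕ) : ℝ) ^ 2 := by
      have h2 : (N : ℝ) ≤ ((n + N : ℕ) : ℝ) := by exact_mod_cast Nat.le_add_left N n
      have h3 : (0 : ℝ) ≤ ((n + N : ℕ) : ℝ) := by positivity
      nlinarith
    nlinarith
  calc ((n + N : ℕ) : ℝ) ^ k * w ^ (n + N) * Real.exp (-(q * ((n + N : ℕ) : ℝ) ^ 2))
      ≤ ((n + N : ℕ) : ℝ) ^ k * w ^ (n + N) * Real.exp (-(q * N)) ^ (n + N) := by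
        apply mul_le_mul_of_nonneg_left h1 (by positivity)
    _ = ((n + N : ℕ) : ℝ) ^ k * r ^ (n + N) := by rw [hr, mul_pow]; ring


lemma key (υ a p : ℝ) (hυ : 0 < υ) (ha : 1 < a) (hp : 0 < p) :
    υ * Real.exp (-(2 * υ)) ≤ deriv (deriv (fun x' => phi υ a x' p)) (a * p / 2) := by
  set q : ℝ := a * p / 2 with hqdef
  have hq : 0 < q := by have : (0:ℝ) < a := lt_trans one_pos ha; positivity
  set x₀ : ℝ := q with hx₀def
  set c : ℕ → ℝ := fun n => υ ^ n / (Nat.factorial n : ℝ) * Real.exp (-(q * (n : ℝ) ^ 2))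
    with hcdef
  have hc_pos : ∀ n, 0 < c n := fun n => by
    have : (0:ℝ) < (Nat.factorial n : ℝ) := by exact_mod_cast Nat.factorial_pos n
    positivity
  set t : Set ℝ := Set.Ioo (x₀ - 1) (x₀ + 1) with htdef
  have ht_open : IsOpen t := isOpen_Ioo
  have ht_conn : IsPreconnected t := (convex_Ioo _ _).isPreconnected
  have hx₀t : x₀ ∈ t := by constructor <;> simp
  set w : ℝ := υ * Real.exp (x₀ + 1) with hwdef
  have hw : 0 < w := by positivity
  -- uniform bound on t
  have hbound : ∀ (k : ℕ) (x : ℝ), x ∈ t → ∀ n : ℕ,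
      c n * (n : ℝ) ^ k * Real.exp (x * n) ≤ (n : ℝ) ^ k * w ^ n * Real.exp (-(q * (n : ℝ) ^ 2)) := by
    intro k x hx n
    have h1 : (1 : ℝ) ≤ (Nat.factorial n : ℝ) := by exact_mod_cast Nat.one_le_iff_ne_zero.mpr (Nat.factorial_pos n).ne'
    have h2 : Real.exp (x * n) ≤ Real.exp ((x₀ + 1) * n) := by
      apply Real.exp_le_exp.mpr
      apply mul_le_mul_of_nonneg_right (le_of_lt hx.2) (Nat.cast_nonneg n)
    have h3 : υ ^ n / (Nat.factorial n : ℝ) ≤ υ ^ n := by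
      apply div_le_self (by positivity) h1
    calc c n * (n : ℝ) ^ k * Real.exp (x * n)
        ≤ υ ^ n * Real.exp (-(q * (n : ℝ) ^ 2)) * (n : ℝ) ^ k * Real.exp ((x₀ + 1) * n) := by
          apply mul_le_mul (by
            apply mul_le_mul_of_nonneg_right _ (by positivity)
            exact mul_le_mul_of_nonneg_right h3 (Real.exp_pos _).le) h2 (Real.exp_pos _).le
            (by positivity)
      _ = (n : ℝ) ^ k * w ^ n * Real.exp (-(q * (n : ℝ) ^ 2)) := by
          rw [hwdef, mul_pow, ← Real.exp_nat_mul]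
          ring_nf
  have hsum : ∀ (k : ℕ) (x : ℝ), x ∈ t →
      Summable (fun n : ℕ => c n * (n : ℝ) ^ k * Real.exp (x * n)) := by
    intro k x hx
    refine (aux_summable k w q hw hq).of_nonneg_of_le
      (fun n => by have := hc_pos n; positivity) (hbound k x hx)
  set F : ℝ → ℝ := fun x => ∑' n : ℕ, c n * Real.exp (x * n) with hFdef
  set F1 : ℝ → ℝ := fun x => ∑' n : ℕ, c n * (n : ℝ) * Real.exp (x * n) with hF1def
  set F2 : ℝ → ℝ := fun x => ∑' n : ℕ, c n * (n : ℝ) ^ 2 * Real.exp (x * n) with hF2def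
  have hsum0 : ∀ x ∈ t, Summable (fun n : ℕ => c n * Real.exp (x * n)) := by
    intro x hx
    have := hsum 0 x hx
    simpa using this
  have hsum1 : ∀ x ∈ t, Summable (fun n : ℕ => c n * (n : ℝ) * Real.exp (x * n)) := by
    intro x hx
    have := hsum 1 x hx
    simpa using this
  -- each term has derivative
  have hterm : ∀ (n : ℕ) (x : ℝ),
      HasDerivAt (fun y => c n * Real.exp (y * n)) (c n * (n : ℝ) * Real.exp (x * n)) x := by
    intro n x
    have h1 : HasDerivAt (fun y : ℝ => y * n) (n : ℝ) x := by
      simpa using (hasDerivAt_id x).mul_const (n : ℝ)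
    have h2 := (h1.exp).const_mul (c n)
    exact h2.congr_deriv (by ring)
  have hterm1 : ∀ (n : ℕ) (x : ℝ),
      HasDerivAt (fun y => c n * (n : ℝ) * Real.exp (y * n)) (c n * (n : ℝ) ^ 2 * Real.exp (x * n)) x := by
    intro n x
    have h1 : HasDerivAt (fun y : ℝ => y * n) (n : ℝ) x := by
      simpa using (hasDerivAt_id x).mul_const (n : ℝ)
    have h2 := (h1.exp).const_mul (c n * (n : ℝ))
    exact h2.congr_deriv (by ring)
  -- derivative of F on t
  have hF' : ∀ x ∈ t, HasDerivAt F (F1 x) x := by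
    intro x hx
    refine hasDerivAt_tsum_of_isPreconnected (aux_summable 1 w q hw hq) ht_open ht_conn
      (fun n y _ => hterm n y) (fun n y hy => ?_) hx₀t (hsum0 x₀ hx₀t) hx
    rw [Real.norm_eq_abs, abs_of_nonneg (by have := hc_pos n; positivity)]
    have := hbound 1 y hy n
    simpa using this
  have hF1' : ∀ x ∈ t, HasDerivAt F1 (F2 x) x := by
    intro x hx
    refine hasDerivAt_tsum_of_isPreconnected (aux_summable 2 w q hw hq) ht_open ht_conn
      (fun n y _ => hterm1 n y) (fun n y hy => ?_) hx₀t (hsum1 x₀ hx₀t) hx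
    rw [Real.norm_eq_abs, abs_of_nonneg (by have := hc_pos n; positivity)]
    have := hbound 2 y hy n
    simpa [mul_assoc] using this
  have hFpos : ∀ x ∈ t, 0 < F x := by
    intro x hx
    refine Summable.tsum_pos (hsum0 x hx) (fun n => by have := hc_pos n; positivity) 0 ?_
    have := hc_pos 0
    positivity
  -- phi as log of F
  have hphi_eq : (fun x' => phi υ a x' p) = fun x' => Real.log (F x') := by
    funext x
    unfold phi
    congr 1
    apply tsum_congr
    intro n
    rw [hcdef]
    simp only []
    rw [Real.exp_sub, Real.exp_neg]
    rw [← hqdef]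
    ring
  have hlog : ∀ x ∈ t, HasDerivAt (fun x' => phi υ a x' p) (F1 x / F x) x := by
    intro x hx
    rw [hphi_eq]
    exact (hF' x hx).log (hFpos x hx).ne'
  have hev : deriv (fun x' => phi υ a x' p) =ᶠ[nhds x₀] fun x => F1 x / F x :=
    Filter.eventuallyEq_of_mem (ht_open.mem_nhds hx₀t) (fun x hx => (hlog x hx).deriv)
  have hdd : deriv (deriv (fun x' => phi υ a x' p)) x₀
      = (F2 x₀ * F x₀ - F1 x₀ * F1 x₀) / F x₀ ^ 2 := by
    rw [hev.deriv_eq]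
    exact ((hF1' x₀ hx₀t).div (hF' x₀ hx₀t) (hFpos x₀ hx₀t).ne').deriv
  rw [hdd]
  -- now the inequality
  set A : ℕ → ℝ := fun n => c n * Real.exp (x₀ * n) with hAdef
  have hA_pos : ∀ n, 0 < A n := fun n => mul_pos (hc_pos n) (Real.exp_pos _)
  have hA0 : A 0 = 1 := by simp [hAdef, hcdef]
  have hA1 : A 1 = υ := by
    simp only [hAdef, hcdef, Nat.cast_one, pow_one, one_pow, mul_one, Nat.factorial_one,
      Nat.cast_one, div_one]
    rw [mul_assoc, ← Real.exp_add]
    rw [hx₀def]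
    simp
  have hSA : Summable A := hsum0 x₀ hx₀t
  have hSA1 : Summable (fun n : ℕ => c n * (n : ℝ) * Real.exp (x₀ * n)) := hsum1 x₀ hx₀t
  have hSA2 : Summable (fun n : ℕ => c n * (n : ℝ) ^ 2 * Real.exp (x₀ * n)) := hsum 2 x₀ hx₀t
  have hF_le : F x₀ ≤ Real.exp υ := by
    have hexp : Real.exp υ = ∑' n : ℕ, υ ^ n / (Nat.factorial n : ℝ) := by
      rw [Real.exp_eq_exp_ℝ, NormedSpace.exp_eq_tsum_div]
    rw [hexp]
    refine Summable.tsum_le_tsum (fun n => ?_) hSA (Real.summable_pow_div_factorial υ)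
    have hn2 : (n : ℝ) ≤ (n : ℝ) ^ 2 := by
      have : n ≤ n ^ 2 := Nat.le_self_pow two_ne_zero n
      calc (n : ℝ) ≤ ((n ^ 2 : ℕ) : ℝ) := by exact_mod_cast this
        _ = (n : ℝ) ^ 2 := by push_cast; ring
    have h1 : Real.exp (-(q * (n : ℝ) ^ 2)) * Real.exp (x₀ * n) ≤ 1 := by
      rw [← Real.exp_add, hx₀def]
      apply Real.exp_le_one_iff.mpr
      nlinarith
    calc c n * Real.exp (x₀ * n)
        = υ ^ n / (Nat.factorial n : ℝ) * (Real.exp (-(q * (n : ℝ) ^ 2)) * Real.exp (x₀ * n)) := by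
          rw [hcdef]; ring
      _ ≤ υ ^ n / (Nat.factorial n : ℝ) * 1 := by
          apply mul_le_mul_of_nonneg_left h1 (by positivity)
      _ = υ ^ n / (Nat.factorial n : ℝ) := mul_one _
  have hF_ge1 : (1 : ℝ) ≤ F x₀ := by
    have h := Summable.le_tsum hSA 0 (fun j _ => (hA_pos j).le)
    rwa [hA0] at h
  have hF2_ge : υ ≤ F2 x₀ := by
    have h := Summable.le_tsum hSA2 1 (fun j _ => by have := hc_pos j; positivity)
    calc υ = A 1 := hA1.symm
      _ = c 1 * ((1 : ℕ) : ℝ) ^ 2 * Real.exp (x₀ * (1 : ℕ)) := by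
          simp [hAdef]
      _ ≤ F2 x₀ := h
  -- Cauchy-Schwarz
  have hCS : F1 x₀ ^ 2 ≤ (F x₀ - 1) * F2 x₀ := by
    set f : ℕ → ℝ := fun n => if n = 0 then 0 else Real.sqrt (A n) with hfdef
    set g : ℕ → ℝ := fun n => Real.sqrt (A n) * n with hgdef
    have hfg : ∀ n, f n * g n = c n * (n : ℝ) * Real.exp (x₀ * n) := by
      intro n
      by_cases h : n = 0
      · subst h; simp [hfdef, hgdef]
      · simp only [hfdef, hgdef, if_neg h]
        rw [show Real.sqrt (A n) * (Real.sqrt (A n) * n) = Real.sqrt (A n) * Real.sqrt (A n) * n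
          by ring, Real.mul_self_sqrt (hA_pos n).le, hAdef]
        ring
    have hf2 : ∀ s : Finset ℕ, ∑ n ∈ s, f n ^ 2 ≤ F x₀ - 1 := by
      intro s
      have h0 : f 0 ^ 2 = 0 := by simp [hfdef]
      have e1 : ∑ n ∈ s, f n ^ 2 = ∑ n ∈ s.erase 0, f n ^ 2 :=
        (Finset.sum_erase (f := fun n => f n ^ 2) s h0).symm
      have e2 : ∑ n ∈ s.erase 0, f n ^ 2 = ∑ n ∈ s.erase 0, A n := by
        refine Finset.sum_congr rfl (fun n hn => ?_)
        have hn0 : n ≠ 0 := Finset.ne_of_mem_erase hn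
        simp only [hfdef, if_neg hn0]
        exact Real.sq_sqrt (hA_pos n).le
      have e3 : ∑ n ∈ s.erase 0, A n + 1 ≤ F x₀ := by
        have h4 : ∑ n ∈ insert 0 (s.erase 0), A n ≤ F x₀ :=
          Summable.sum_le_tsum _ (fun i _ => (hA_pos i).le) hSA
        rwa [Finset.sum_insert (Finset.notMem_erase 0 s), hA0, add_comm] at h4
      rw [e1, e2]; linarith
    have hg2 : ∀ s : Finset ℕ, ∑ n ∈ s, g n ^ 2 ≤ F2 x₀ := by
      intro s
      have e2 : ∑ n ∈ s, g n ^ 2 = ∑ n ∈ s, c n * (n : ℝ) ^ 2 * Real.exp (x₀ * n) := by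
        refine Finset.sum_congr rfl (fun n _ => ?_)
        rw [hgdef]
        simp only []
        rw [mul_pow, Real.sq_sqrt (hA_pos n).le, hAdef]
        ring
      rw [e2]
      exact Summable.sum_le_tsum _ (fun i _ => by have := hc_pos i; positivity) hSA2
    have hM : (0 : ℝ) ≤ (F x₀ - 1) * F2 x₀ :=
      mul_nonneg (by linarith) (le_trans hυ.le hF2_ge)
    have hkey : ∀ s : Finset ℕ, ∑ n ∈ s, c n * (n : ℝ) * Real.exp (x₀ * n) ≤
        Real.sqrt ((F x₀ - 1) * F2 x₀) := by
      intro s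
      have h1 := Finset.sum_mul_sq_le_sq_mul_sq s f g
      have h2 : (∑ n ∈ s, c n * (n : ℝ) * Real.exp (x₀ * n)) ^ 2 ≤ (F x₀ - 1) * F2 x₀ := by
        rw [show (∑ n ∈ s, c n * (n : ℝ) * Real.exp (x₀ * n)) = ∑ n ∈ s, f n * g n from
          (Finset.sum_congr rfl (fun n _ => (hfg n))).symm]
        refine le_trans h1 ?_
        refine mul_le_mul (hf2 s) (hg2 s) ?_ (by linarith)
        exact Finset.sum_nonneg (fun n _ => sq_nonneg _)
      have h3 : (0 : ℝ) ≤ ∑ n ∈ s, c n * (n : ℝ) * Real.exp (x₀ * n) :=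
        Finset.sum_nonneg (fun n _ => by have := hc_pos n; positivity)
      calc ∑ n ∈ s, c n * (n : ℝ) * Real.exp (x₀ * n)
          = Real.sqrt ((∑ n ∈ s, c n * (n : ℝ) * Real.exp (x₀ * n)) ^ 2) := by
            rw [Real.sqrt_sq h3]
        _ ≤ Real.sqrt ((F x₀ - 1) * F2 x₀) := Real.sqrt_le_sqrt h2
    have hS1le : F1 x₀ ≤ Real.sqrt ((F x₀ - 1) * F2 x₀) := Summable.tsum_le_of_sum_le hSA1 hkey
    have hS1nonneg : (0 : ℝ) ≤ F1 x₀ :=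
      tsum_nonneg (fun n => by have := hc_pos n; positivity)
    calc F1 x₀ ^ 2 ≤ Real.sqrt ((F x₀ - 1) * F2 x₀) ^ 2 := by
          apply pow_le_pow_left₀ hS1nonneg hS1le
      _ = (F x₀ - 1) * F2 x₀ := Real.sq_sqrt hM
  have hnum : υ ≤ F2 x₀ * F x₀ - F1 x₀ * F1 x₀ := by
    have h5 : F1 x₀ * F1 x₀ ≤ (F x₀ - 1) * F2 x₀ := by rw [← pow_two]; exact hCS
    have h6 : F2 x₀ * F x₀ - (F x₀ - 1) * F2 x₀ = F2 x₀ := by ring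
    linarith
  have hden : F x₀ ^ 2 ≤ Real.exp (2 * υ) := by
    calc F x₀ ^ 2 ≤ Real.exp υ ^ 2 := by
          apply pow_le_pow_left₀ (hFpos x₀ hx₀t).le hF_le
      _ = Real.exp (2 * υ) := by rw [sq, ← Real.exp_add, two_mul]
  rw [Real.exp_neg, ← div_eq_mul_inv]
  exact div_le_div₀ (le_trans hυ.le hnum) hnum (pow_pos (hFpos x₀ hx₀t) 2) hden


theorem stmt_19 (υ a : ℝ) (hυ : 0 < υ) (ha : 1 < a) :
    (∀ p : ℝ, 0 < p →
      p * υ * Real.exp (-(2 * υ)) ≤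
        p * deriv (deriv (fun x' => phi υ a x' p)) (a * p / 2)) ∧
    (1 ≤ υ⁻¹ * Real.exp (2 * υ) *
        deriv (deriv (fun x' => phi υ a x' (υ⁻¹ * Real.exp (2 * υ))))
          (a * (υ⁻¹ * Real.exp (2 * υ)) / 2)) ∧
    (∀ p : ℝ, υ⁻¹ * Real.exp (2 * υ) < p →
      1 < p * deriv (deriv (fun x' => phi υ a x' p)) (a * p / 2)) := by
  have key₂ : ∀ p : ℝ, 0 < p → υ * Real.exp (-(2 * υ)) ≤
      deriv (deriv (fun x' => phi υ a x' p)) (a * p / 2) := fun p hp => key υ a p hυ ha hp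
  have hp₁ : (0 : ℝ) < υ⁻¹ * Real.exp (2 * υ) := by positivity
  have hp₁mul : υ⁻¹ * Real.exp (2 * υ) * (υ * Real.exp (-(2 * υ))) = 1 := by
    rw [Real.exp_neg]
    field_simp
  refine ⟨?_, ?_, ?_⟩
  · intro p hp
    have h := key₂ p hp
    calc p * υ * Real.exp (-(2 * υ)) = p * (υ * Real.exp (-(2 * υ))) := by ring
      _ ≤ p * deriv (deriv (fun x' => phi υ a x' p)) (a * p / 2) :=
        mul_le_mul_of_nonneg_left h hp.le
  · have h := key₂ _ hp₁
    calc (1 : ℝ) = υ⁻¹ * Real.exp (2 * υ) * (υ * Real.exp (-(2 * υ))) := hp₁mul.symm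
      _ ≤ υ⁻¹ * Real.exp (2 * υ) *
          deriv (deriv (fun x' => phi υ a x' (υ⁻¹ * Real.exp (2 * υ))))
            (a * (υ⁻¹ * Real.exp (2 * υ)) / 2) := mul_le_mul_of_nonneg_left h hp₁.le
  · intro p hp
    have hp0 : 0 < p := lt_trans hp₁ hp
    have h := key₂ p hp0
    have hpos : 0 < υ * Real.exp (-(2 * υ)) := by positivity
    calc (1 : ℝ) = υ⁻¹ * Real.exp (2 * υ) * (υ * Real.exp (-(2 * υ))) := hp₁mul.symm
      _ < p * (υ * Real.exp (-(2 * υ))) := mul_lt_mul_of_pos_right hp hpos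
      _ ≤ p * deriv (deriv (fun x' => phi υ a x' p)) (a * p / 2) :=
        mul_le_mul_of_nonneg_left h hp0.le
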